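/- arXiv:1102.0865 — 2 statements merged into one kernel-verified Lean document; each statement's English description precedes it below -/
import Mathlib

section
/- Let G be a finite group and V a finite-dimensional complex representation of G. Suppose ω and ω' are two G-invariant nondegenerate alternating bilinear forms on V. Then there exists a G-equivariant linear automorphism φ of V such that ω'(φ(x), φ(y)) = ω(x, y) for all x, y ∈ V. -/
open Polynomial

/-- Newton iteration: lifting a square root along a nilpotent. -/
lemma aux_newton {S : Type*} [CommRing S] (h2 : IsUnit (2 : S)) (a : S) :
    ∀ k : ℕ, ∀ b : S, IsUnit b → (b ^ 2 - a) ^ 2 ^ k = 0 → ∃ c : S, c ^ 2 = a := by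
  intro k
  induction k with
  | zero =>
    intro b hb h
    exact ⟨b, by simpa [sub_eq_zero] using h⟩
  | succ k ih =>
    intro b hb h
    set d : S := b ^ 2 - a with hd
    have hdnil : IsNilpotent d := ⟨2 ^ (k + 1), h⟩
    set u : Sˣ := h2.unit * hb.unit with hu
    have huval : (u : S) = 2 * b := by simp [hu, Units.val_mul]
    set v : S := ((u⁻¹ : Sˣ) : S) with hv
    have hv1 : (2 * b) * v = 1 := by rw [← huval, hv]; exact u.mul_inv
    set b' : S := b - v * d with hb'
    have hb'unit : IsUnit b' := by
      have hnil : IsNilpotent (-(v * d)) := ((Commute.all v d).isNilpotent_mul_left hdnil).neg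
      have := hnil.isUnit_add_right_of_commute hb (Commute.all _ _)
      simpa [hb', sub_eq_add_neg, add_comm] using this
    have hkey : b' ^ 2 - a = v ^ 2 * d ^ 2 := by
      rw [hb', hd]
      linear_combination (a - b ^ 2) * hv1
    refine ih b' hb'unit ?_
    rw [hkey, mul_pow, ← pow_mul, ← pow_mul]
    have hdz : d ^ (2 * 2 ^ k) = 0 := by
      rw [← pow_succ']; exact h
    rw [hdz, mul_zero]

lemma aux_sqrt_unit {S : Type*} [CommRing S] (h2 : IsUnit (2 : S)) {a b : S}
    (hb : IsUnit b) (hnil : IsNilpotent (b ^ 2 - a)) : ∃ c : S, c ^ 2 = a := by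
  obtain ⟨n, hn⟩ := hnil
  refine aux_newton h2 a n b hb ?_
  have hle : n ≤ 2 ^ n := Nat.le_of_lt Nat.lt_two_pow_self
  calc (b ^ 2 - a) ^ 2 ^ n = (b ^ 2 - a) ^ n * (b ^ 2 - a) ^ (2 ^ n - n) := by
        rw [← pow_add, Nat.add_sub_cancel' hle]
    _ = 0 := by rw [hn, zero_mul]


/-- Over `ℂ`, `X` is a square modulo any monic polynomial not vanishing at `0`. -/
lemma aux_poly_sqrt (m : ℂ[X]) (hm : m.Monic) (h0 : ¬ m.IsRoot 0) :
    ∃ p : ℂ[X], m ∣ p ^ 2 - X := by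
  classical
  have hsq : ∀ z : ℂ, ∃ w : ℂ, w ^ 2 = z := fun z =>
    IsAlgClosed.exists_pow_nat_eq z zero_lt_two
  choose sq hsqspec using hsq
  set s : Finset ℂ := m.roots.toFinset with hs
  set q : ℂ[X] := Lagrange.interpolate s id sq with hq
  have hqeval : ∀ z ∈ m.roots, q.eval z = sq z := by
    intro z hz
    have := Lagrange.eval_interpolate_at_node sq (Set.injOn_id _)
      (Multiset.mem_toFinset.2 hz)
    simpa [hq] using this
  -- divisibility of a power by m
  have hcard : m.roots.card = m.natDegree :=
    splits_iff_card_roots.mp (IsAlgClosed.splits m)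
  have hprod : (m.roots.map fun a => X - C a).prod = m :=
    prod_multiset_X_sub_C_of_monic_of_roots_card_eq hm hcard
  have hdvd : m ∣ (q ^ 2 - X) ^ m.roots.card := by
    conv_lhs => rw [← hprod]
    have h1 : (m.roots.map fun a => X - C a).prod ∣
        (m.roots.map fun _ => q ^ 2 - X).prod := by
      apply Multiset.prod_dvd_prod_of_dvd
      intro z hz
      rw [dvd_iff_isRoot]
      simp [IsRoot, hqeval z hz, hsqspec]
    rwa [Multiset.map_const', Multiset.prod_replicate] at h1
  -- pass to the quotient ring
  set I : Ideal ℂ[X] := Ideal.span {m} with hI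
  have h2 : IsUnit (2 : ℂ[X] ⧸ I) := by
    have h2' : (2 : ℂ[X] ⧸ I) = algebraMap ℂ (ℂ[X] ⧸ I) 2 := by
      rw [map_ofNat]
    rw [h2']
    exact (isUnit_iff_ne_zero.mpr two_ne_zero).map _
  have hmz : Ideal.Quotient.mk I m = 0 :=
    Ideal.Quotient.eq_zero_iff_mem.2 (Ideal.mem_span_singleton_self m)
  have hbunit : IsUnit (Ideal.Quotient.mk I q) := by
    have hmne : m ≠ 0 := hm.ne_zero
    have hcop : IsCoprime q m := by
      rw [Polynomial.isCoprime_iff_aeval_ne_zero_of_isAlgClosed (k := ℂ) (K := ℂ) q m]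
      intro z
      by_cases hz : aeval z m = 0
      · left
        have hzr : z ∈ m.roots := by
          rw [mem_roots hmne]
          simpa [Polynomial.aeval_def, Polynomial.eval₂_eq_eval_map] using hz
        have hzne : z ≠ 0 := by
          rintro rfl
          exact h0 (isRoot_of_mem_roots hzr)
        have : (aeval z q : ℂ) = sq z := by
          simpa [Polynomial.aeval_def, Polynomial.eval₂_eq_eval_map] using hqeval z hzr
        rw [this]
        intro hzero
        exact hzne (by rw [← hsqspec z, hzero]; ring)
      · right; exact hz
    obtain ⟨u, v, huv⟩ := hcop
    have := congrArg (Ideal.Quotient.mk I) huv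
    simp only [map_add, map_mul, map_one, hmz, mul_zero, add_zero] at this
    exact IsUnit.of_mul_eq_one _ (by rw [mul_comm]; exact this)
  have hnil : IsNilpotent ((Ideal.Quotient.mk I q) ^ 2 - Ideal.Quotient.mk I X) := by
    refine ⟨m.roots.card, ?_⟩
    have : ((Ideal.Quotient.mk I q) ^ 2 - Ideal.Quotient.mk I X) ^ m.roots.card
        = Ideal.Quotient.mk I ((q ^ 2 - X) ^ m.roots.card) := by
      simp [map_pow, map_sub]
    rw [this, Ideal.Quotient.eq_zero_iff_mem]
    exact Ideal.mem_span_singleton.2 hdvd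
  obtain ⟨c, hc⟩ := aux_sqrt_unit h2 hbunit hnil
  obtain ⟨p, hp⟩ := Ideal.Quotient.mk_surjective c
  refine ⟨p, ?_⟩
  have hz : Ideal.Quotient.mk I (p ^ 2 - X) = 0 := by
    rw [map_sub, map_pow, hp, hc, sub_self]
  exact Ideal.mem_span_singleton.1 (Ideal.Quotient.eq_zero_iff_mem.1 hz)

/-- **Equivariant linear Darboux theorem** (Lemma 1.2): if `V` is a finite-dimensional
complex representation of a finite group `G` carrying two `G`-invariant nondegenerate
alternating bilinear forms `ω` and `ω'`, then there is a `G`-equivariant linear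
automorphism `φ` of `V` with `ω'(φ x, φ y) = ω (x, y)`. -/

theorem equivariant_symplectic_forms_equivalent
    (G : Type*) [Group G] [Finite G]
    (V : Type*) [AddCommGroup V] [Module ℂ V] [FiniteDimensional ℂ V]
    (ρ : Representation ℂ G V)
    (ω ω' : V →ₗ[ℂ] V →ₗ[ℂ] ℂ)
    (hωinv : ∀ (g : G) (x y : V), ω (ρ g x) (ρ g y) = ω x y)
    (hω'inv : ∀ (g : G) (x y : V), ω' (ρ g x) (ρ g y) = ω' x y)
    (hωalt : ∀ x : V, ω x x = 0)
    (hω'alt : ∀ x : V, ω' x x = 0)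
    (hωnd : ∀ x : V, (∀ y : V, ω x y = 0) → x = 0)
    (hω'nd : ∀ x : V, (∀ y : V, ω' x y = 0) → x = 0) :
    ∃ φ : V ≃ₗ[ℂ] V,
      (∀ (g : G) (x : V), φ (ρ g x) = ρ g (φ x)) ∧
      (∀ x y : V, ω' (φ x) (φ y) = ω x y) := by
  classical
  -- skew-symmetry from the alternating property
  have hωskew : ∀ x y : V, ω x y = -ω y x := by
    intro x y
    have h := hωalt (x + y)
    simp only [map_add, LinearMap.add_apply, hωalt x, hωalt y] at h
    linear_combination h
  have hω'skew : ∀ x y : V, ω' x y = -ω' y x := by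
    intro x y
    have h := hω'alt (x + y)
    simp only [map_add, LinearMap.add_apply, hω'alt x, hω'alt y] at h
    linear_combination h
  -- `ω'` as an isomorphism onto the dual
  have hω'inj : Function.Injective (ω' : V →ₗ[ℂ] Module.Dual ℂ V) := by
    rw [injective_iff_map_eq_zero]
    intro x hx
    exact hω'nd x fun y => by rw [hx]; rfl
  have hω'bij : Function.Bijective (ω' : V →ₗ[ℂ] Module.Dual ℂ V) :=
    ⟨hω'inj, (LinearMap.injective_iff_surjective_of_finrank_eq_finrank
      (Subspace.dual_finrank_eq).symm).1 hω'inj⟩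
  set e : V ≃ₗ[ℂ] Module.Dual ℂ V := LinearEquiv.ofBijective _ hω'bij with he
  set A : V →ₗ[ℂ] V := e.symm.toLinearMap ∘ₗ ω with hAdef
  have hA : ∀ x y : V, ω' (A x) y = ω x y := by
    intro x y
    have h1 : ω' (A x) = ω x := by
      have h2 := e.apply_symm_apply (ω x)
      simp only [he, LinearEquiv.ofBijective_apply] at h2
      exact h2
    exact DFunLike.congr_fun h1 y
  have hext : ∀ u v : V, (∀ y, ω' u y = ω' v y) → u = v := by
    intro u v h
    have := hω'nd (u - v) fun y => by
      simp [map_sub, LinearMap.sub_apply, h y]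
    exact sub_eq_zero.1 this
  have hρinv : ∀ (g : G) (y : V), ρ g (ρ g⁻¹ y) = y := by
    intro g y
    have h : ρ g * ρ g⁻¹ = 1 := by rw [← map_mul, mul_inv_cancel, map_one]
    calc ρ g (ρ g⁻¹ y) = (ρ g * ρ g⁻¹) y := rfl
      _ = y := by rw [h]; rfl
  have hAequiv : ∀ (g : G) (x : V), A (ρ g x) = ρ g (A x) := by
    intro g x
    apply hext
    intro y
    calc ω' (A (ρ g x)) y = ω (ρ g x) y := hA _ _
      _ = ω (ρ g x) (ρ g (ρ g⁻¹ y)) := by rw [hρinv]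
      _ = ω x (ρ g⁻¹ y) := hωinv _ _ _
      _ = ω' (A x) (ρ g⁻¹ y) := (hA _ _).symm
      _ = ω' (ρ g (A x)) (ρ g (ρ g⁻¹ y)) := (hω'inv _ _ _).symm
      _ = ω' (ρ g (A x)) y := by rw [hρinv]
  have hAadj : ∀ x y : V, ω' (A x) y = ω' x (A y) := by
    intro x y
    calc ω' (A x) y = ω x y := hA _ _
      _ = -ω y x := hωskew _ _
      _ = -ω' (A y) x := by rw [hA]
      _ = ω' x (A y) := (hω'skew x (A y)).symm
  have hAinj : Function.Injective A := by
    rw [injective_iff_map_eq_zero]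
    intro x hx
    exact hωnd x fun y => by rw [← hA x y, hx, map_zero]; rfl
  have hAbij : Function.Bijective A :=
    ⟨hAinj, LinearMap.injective_iff_surjective.1 hAinj⟩
  have hAunit : IsUnit A := (Module.End.isUnit_iff A).2 hAbij
  -- the minimal polynomial of `A`
  have hAint : IsIntegral ℂ A := Algebra.IsIntegral.isIntegral (R := ℂ) A
  have hm : (minpoly ℂ A).Monic := minpoly.monic hAint
  have h0 : ¬ (minpoly ℂ A).IsRoot 0 := by
    intro hr
    have hev : Module.End.HasEigenvalue A 0 := Module.End.hasEigenvalue_of_isRoot hr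
    obtain ⟨v, hv⟩ := hev.exists_hasEigenvector
    have hv0 : A v = 0 := by simpa using hv.apply_eq_smul
    exact hv.2 (hAinj (by simpa using hv0))
  obtain ⟨p, hpd⟩ := aux_poly_sqrt (minpoly ℂ A) hm h0
  set B : V →ₗ[ℂ] V := aeval A p with hBdef0
  have hBA : B * B = A := by
    obtain ⟨t, ht⟩ := hpd
    have h1 : aeval A (p ^ 2 - X) = aeval A (minpoly ℂ A) * aeval A t := by
      rw [ht, map_mul]
    rw [minpoly.aeval, zero_mul, map_sub, Polynomial.aeval_X, sub_eq_zero, map_pow] at h1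
    rw [hBdef0, ← sq]
    exact h1
  -- powers of `A` are equivariant and self-adjoint
  have hApow_equiv : ∀ (n : ℕ) (g : G) (x : V), (A ^ n) (ρ g x) = ρ g ((A ^ n) x) := by
    intro n
    induction n with
    | zero => intro g x; simp
    | succ n ih =>
      intro g x
      have h1 : (A ^ (n + 1)) = A ^ n * A := pow_succ A n
      rw [h1]
      calc (A ^ n * A) (ρ g x) = (A ^ n) (A (ρ g x)) := rfl
        _ = (A ^ n) (ρ g (A x)) := by rw [hAequiv]
        _ = ρ g ((A ^ n) (A x)) := ih g (A x)
        _ = ρ g ((A ^ n * A) x) := rfl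
  have hApow_adj : ∀ (n : ℕ) (x y : V), ω' ((A ^ n) x) y = ω' x ((A ^ n) y) := by
    intro n
    induction n with
    | zero => intro x y; simp
    | succ n ih =>
      intro x y
      have h1 : (A ^ (n + 1)) = A ^ n * A := pow_succ A n
      rw [h1]
      calc ω' ((A ^ n * A) x) y = ω' ((A ^ n) (A x)) y := rfl
        _ = ω' (A x) ((A ^ n) y) := ih (A x) y
        _ = ω' x (A ((A ^ n) y)) := hAadj _ _
        _ = ω' x ((A ^ n * A) y) := by
            congr 1
            calc A ((A ^ n) y) = (A * A ^ n) y := rfl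
              _ = (A ^ n * A) y := by rw [(Commute.self_pow A n).symm.eq]
  have hBapp : ∀ x : V, B x =
      ∑ i ∈ Finset.range (p.natDegree + 1), p.coeff i • (A ^ i) x := by
    intro x
    rw [hBdef0, Polynomial.aeval_eq_sum_range]
    simp [LinearMap.sum_apply, LinearMap.smul_apply]
  have hBequiv : ∀ (g : G) (x : V), B (ρ g x) = ρ g (B x) := by
    intro g x
    rw [hBapp, hBapp, map_sum]
    refine Finset.sum_congr rfl fun i _ => ?_
    rw [map_smul, hApow_equiv]
  have hBadj : ∀ x y : V, ω' (B x) y = ω' x (B y) := by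
    intro x y
    simp only [hBapp, map_sum, map_smul, LinearMap.sum_apply, LinearMap.smul_apply]
    exact Finset.sum_congr rfl fun i _ => by rw [hApow_adj]
  have hω'B : ∀ x y : V, ω' (B x) (B y) = ω x y := by
    intro x y
    calc ω' (B x) (B y) = ω' x (B (B y)) := hBadj _ _
      _ = ω' x ((B * B) y) := rfl
      _ = ω' x (A y) := by rw [hBA]
      _ = -ω' (A y) x := hω'skew _ _
      _ = -ω y x := by rw [hA]
      _ = ω x y := (hωskew x y).symm
  -- B is invertible
  have hBunit : IsUnit B := by
    obtain ⟨u, hu⟩ := hAunit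
    have hcomm : Commute B (u : V →ₗ[ℂ] V) := by
      rw [hu]
      show B * A = A * B
      rw [← hBA, mul_assoc]
    refine ⟨⟨B, B * ↑u⁻¹, ?_, ?_⟩, rfl⟩
    · rw [← mul_assoc, hBA, ← hu]
      exact u.mul_inv
    · rw [mul_assoc, (hcomm.units_inv_right).symm.eq, ← mul_assoc, hBA, ← hu]
      exact u.mul_inv
  refine ⟨LinearEquiv.ofBijective B ((Module.End.isUnit_iff B).1 hBunit),
    fun g x => ?_, fun x y => ?_⟩
  · simpa [LinearEquiv.ofBijective_apply] using hBequiv g x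
  · simpa [LinearEquiv.ofBijective_apply] using hω'B x y
end

section
/- For ψ ∈ GL₂(ℂ) with matrix entries α, β, γ, δ (first row (α, β), second row (γ, δ)), let T(ψ) be the 3×3 complex matrix representing the substitution action of ψ on coefficient vectors (x, y, z) of binary quadratic forms x·a² + 2y·ab + z·b², i.e. T(ψ)·(x, y, z) is the coefficient vector of x(αa + βb)² + 2y(αa + βb)(γa + δb) + z(γa + δb)²; explicitly T(ψ) has rows (α², 2αγ, γ²), (αβ, αδ + βγ, γδ), (β², 2βδ, δ²). Then: for every φ ∈ GL₃(ℂ) preserving the quadratic form q(x, y, z) = xz − y² (i.e. q(φ(x, y, z)) = q(x, y, z) for all (x, y, z)), there exists ψ ∈ GL₂(ℂ) with T(ψ) = φ; moreover, for ψ, ψ' ∈ GL₂(ℂ), T(ψ) = T(ψ') if and only if ψ' = ψ or ψ' = −ψ. -/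
/-- The coefficient action of `ψ ∈ GL₂(ℂ)` on binary quadratic forms
`x·a² + 2y·ab + z·b²`, as a 3×3 matrix acting on `(x, y, z)`. -/
noncomputable def quadSubstMatrix (ψ : Matrix.GeneralLinearGroup (Fin 2) ℂ) :
    Matrix (Fin 3) (Fin 3) ℂ :=
  let α := (ψ : Matrix (Fin 2) (Fin 2) ℂ) 0 0
  let β := (ψ : Matrix (Fin 2) (Fin 2) ℂ) 0 1
  let γ := (ψ : Matrix (Fin 2) (Fin 2) ℂ) 1 0
  let δ := (ψ : Matrix (Fin 2) (Fin 2) ℂ) 1 1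
  !![α^2, 2*α*γ, γ^2;
     α*β, α*δ + β*γ, γ*δ;
     β^2, 2*β*δ, δ^2]

lemma quadConstruct (a0 a1 a2 b0 b1 b2 c0 c1 c2 : ℂ)
    (hc00 : a0*c0 - b0^2 = 0)
    (hc11 : a1*c1 - b1^2 = -1)
    (hc22 : a2*c2 - b2^2 = 0)
    (hc01 : a0*c1 + a1*c0 - 2*b0*b1 = 0)
    (hc12 : a1*c2 + a2*c1 - 2*b1*b2 = 0)
    (hr00 : 2*(a0*a2) - (1/2)*a1^2 = 0)
    (hr01 : a0*b2 + a2*b0 - (1/2)*(a1*b1) = 0)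
    (hr02 : a0*c2 + a2*c0 - (1/2)*(a1*c1) = 1) :
    ∃ α β γ δ : ℂ, α*δ - β*γ ≠ 0 ∧
      a0 = α^2 ∧ a1 = 2*α*γ ∧ a2 = γ^2 ∧
      b0 = α*β ∧ b1 = α*δ + β*γ ∧ b2 = γ*δ ∧
      c0 = β^2 ∧ c1 = 2*β*δ ∧ c2 = δ^2 := by
  by_cases h0 : a0 = 0
  · subst h0
    have ha1 : a1 = 0 := by
      have : a1^2 = 0 := by linear_combination -2*hr00
      exact (pow_eq_zero_iff (two_ne_zero)).mp this
    subst ha1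
    have hb0 : b0 = 0 := by
      have : b0^2 = 0 := by linear_combination -hc00
      exact (pow_eq_zero_iff (two_ne_zero)).mp this
    subst hb0
    have ha2 : a2 ≠ 0 := by
      intro h; rw [h] at hr02; simp at hr02
    obtain ⟨γ, hγ⟩ := IsAlgClosed.exists_pow_nat_eq (k := ℂ) a2 zero_lt_two
    have hγ0 : γ ≠ 0 := by
      intro h; rw [h] at hγ; simp at hγ; exact ha2 hγ.symm
    subst hγ
    have hb1 : b1^2 = 1 := by linear_combination -hc11
    refine ⟨0, b1/γ, γ, b2/γ, ?_, by ring, by ring, rfl, by ring, by field_simp; ring, by field_simp, ?_, ?_, ?_⟩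
    · intro h
      have hb1z : b1 = 0 := by
        field_simp at h
        have h' : γ * b1 = 0 := by linear_combination -h
        exact (mul_eq_zero.mp h').resolve_left hγ0
      rw [hb1z] at hb1; norm_num at hb1
    · field_simp
      linear_combination hr02 + hc11
    · field_simp
      linear_combination hc12
    · field_simp
      linear_combination hc22
  · obtain ⟨α, hα⟩ := IsAlgClosed.exists_pow_nat_eq (k := ℂ) a0 zero_lt_two
    subst hα
    have hαne : α ≠ 0 := by
      intro h; rw [h] at h0; simp at h0
    refine ⟨α, b0/α, a1/(2*α), (2*α^2*b1 - a1*b0)/(2*α^3), ?_, rfl, by field_simp, ?_, by field_simp, ?_, ?_, ?_, ?_, ?_⟩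
    · have hsq : (α*((2*α^2*b1 - a1*b0)/(2*α^3)) - (b0/α)*(a1/(2*α)))^2 = 1 := by
        field_simp
        linear_combination 4*(-α^4*hc11 + a1*α^2*hc01 - a1^2*hc00)
      intro h
      rw [h] at hsq
      norm_num at hsq
    · field_simp
      linear_combination 2*hr00
    · field_simp
      ring
    · field_simp
      linear_combination 4*α^2*hr01 - 2*b0*hr00
    · field_simp
      linear_combination hc00
    · field_simp
      linear_combination α^2*hc01 - a1*hc00
    · field_simp
      linear_combination 4*α^4*hr02 + 4*α^4*hc11 - 2*α^2*a1*hc01 + 4*α^2*a2*hc00 - 4*α^2*c0*hr00 + 2*b0^2*hr00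

/-- Every `φ ∈ GL₃(ℂ)` preserving the quadratic form `xz - y²` is induced by some
`ψ ∈ GL₂(ℂ)` via the substitution action on binary quadratic forms; and two elements
of `GL₂(ℂ)` induce the same matrix iff they agree up to sign. -/
theorem quadric_automorphisms_from_GL2 :
    (∀ φ : Matrix.GeneralLinearGroup (Fin 3) ℂ,
      (∀ v : Fin 3 → ℂ,
        ((φ : Matrix (Fin 3) (Fin 3) ℂ).mulVec v 0) *
            ((φ : Matrix (Fin 3) (Fin 3) ℂ).mulVec v 2) -
          ((φ : Matrix (Fin 3) (Fin 3) ℂ).mulVec v 1) ^ 2 = v 0 * v 2 - v 1 ^ 2) →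
      ∃ ψ : Matrix.GeneralLinearGroup (Fin 2) ℂ,
        quadSubstMatrix ψ = (φ : Matrix (Fin 3) (Fin 3) ℂ)) ∧
    (∀ ψ ψ' : Matrix.GeneralLinearGroup (Fin 2) ℂ,
      quadSubstMatrix ψ = quadSubstMatrix ψ' ↔ ψ' = ψ ∨ ψ' = -ψ) := by
  constructor
  · intro φ hφ
    set M : Matrix (Fin 3) (Fin 3) ℂ := (φ : Matrix (Fin 3) (Fin 3) ℂ) with hMdef
    have hE : ∀ x y z : ℂ, (M 0 0 * x + M 0 1 * y + M 0 2 * z) * (M 2 0 * x + M 2 1 * y + M 2 2 * z)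
        - (M 1 0 * x + M 1 1 * y + M 1 2 * z)^2 = x*z - y^2 := by
      intro x y z
      have := hφ ![x, y, z]
      simpa [Matrix.mulVec, dotProduct, Fin.sum_univ_three] using this
    set Qm : Matrix (Fin 3) (Fin 3) ℂ := !![0,0,1;0,-2,0;1,0,0] with hQm
    set Qi : Matrix (Fin 3) (Fin 3) ℂ := !![0,0,1;0,-(1/2),0;1,0,0] with hQi
    have hQmQi : Qm * Qi = 1 := by
      ext i j
      fin_cases i <;> fin_cases j <;>
        simp [hQm, hQi, Matrix.mul_apply, Fin.sum_univ_three, Matrix.one_apply,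
          Matrix.vecHead, Matrix.vecTail]
    have hQiQm : Qi * Qm = 1 := by
      ext i j
      fin_cases i <;> fin_cases j <;>
        simp [hQm, hQi, Matrix.mul_apply, Fin.sum_univ_three, Matrix.one_apply,
          Matrix.vecHead, Matrix.vecTail]
    have hQ : M.transpose * Qm * M = Qm := by
      ext i j
      fin_cases i <;> fin_cases j <;>
        simp [hQm, Matrix.mul_apply, Fin.sum_univ_three, Matrix.transpose_apply,
          Matrix.vecHead, Matrix.vecTail]
      · linear_combination 2 * hE 1 0 0
      · linear_combination hE 1 1 0 - hE 1 0 0 - hE 0 1 0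
      · linear_combination hE 1 0 1 - hE 1 0 0 - hE 0 0 1
      · linear_combination hE 1 1 0 - hE 1 0 0 - hE 0 1 0
      · linear_combination 2 * hE 0 1 0
      · linear_combination hE 0 1 1 - hE 0 1 0 - hE 0 0 1
      · linear_combination hE 1 0 1 - hE 1 0 0 - hE 0 0 1
      · linear_combination hE 0 1 1 - hE 0 1 0 - hE 0 0 1
      · linear_combination 2 * hE 0 0 1
    set N : Matrix (Fin 3) (Fin 3) ℂ :=
      ((φ⁻¹ : Matrix.GeneralLinearGroup (Fin 3) ℂ) : Matrix (Fin 3) (Fin 3) ℂ) with hN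
    have hMN : M * N = 1 := by
      rw [hMdef, hN]
      exact_mod_cast φ.mul_inv
    have h2 : M.transpose * Qm = Qm * N := by
      have h := congrArg (· * N) hQ
      simp only [Matrix.mul_assoc, hMN, Matrix.mul_one] at h
      exact h
    have hMT : M.transpose = Qm * (N * Qi) := by
      calc M.transpose = M.transpose * (Qm * Qi) := by rw [hQmQi, Matrix.mul_one]
      _ = (M.transpose * Qm) * Qi := by rw [Matrix.mul_assoc]
      _ = (Qm * N) * Qi := by rw [h2]
      _ = Qm * (N * Qi) := by rw [Matrix.mul_assoc]
    have key : M * Qi * M.transpose = Qi := by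
      rw [hMT]
      calc M * Qi * (Qm * (N * Qi)) = (M * (Qi * Qm)) * (N * Qi) := by
            simp only [Matrix.mul_assoc]
      _ = M * (N * Qi) := by rw [hQiQm, Matrix.mul_one]
      _ = (M * N) * Qi := by rw [Matrix.mul_assoc]
      _ = Qi := by rw [hMN, Matrix.one_mul]
    have hr00 : 2*(M 0 0 * M 0 2) - (1/2)*(M 0 1)^2 = 0 := by
      have := Matrix.ext_iff.mpr key 0 0
      simp [hQi, Matrix.mul_apply, Fin.sum_univ_three, Matrix.transpose_apply,
        Matrix.vecHead, Matrix.vecTail] at this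
      linear_combination this
    have hr01 : M 0 0 * M 1 2 + M 0 2 * M 1 0 - (1/2)*(M 0 1 * M 1 1) = 0 := by
      have := Matrix.ext_iff.mpr key 0 1
      simp [hQi, Matrix.mul_apply, Fin.sum_univ_three, Matrix.transpose_apply,
        Matrix.vecHead, Matrix.vecTail] at this
      linear_combination this
    have hr02 : M 0 0 * M 2 2 + M 0 2 * M 2 0 - (1/2)*(M 0 1 * M 2 1) = 1 := by
      have := Matrix.ext_iff.mpr key 0 2
      simp [hQi, Matrix.mul_apply, Fin.sum_univ_three, Matrix.transpose_apply,
        Matrix.vecHead, Matrix.vecTail] at this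
      linear_combination this
    obtain ⟨α, β, γ, δ, hdet, h1, h2', h3, h4, h5, h6, h7, h8, h9⟩ :=
      quadConstruct (M 0 0) (M 0 1) (M 0 2) (M 1 0) (M 1 1) (M 1 2) (M 2 0) (M 2 1) (M 2 2)
        (by linear_combination hE 1 0 0)
        (by linear_combination hE 0 1 0)
        (by linear_combination hE 0 0 1)
        (by linear_combination hE 1 1 0 - hE 1 0 0 - hE 0 1 0)
        (by linear_combination hE 0 1 1 - hE 0 1 0 - hE 0 0 1)
        hr00 hr01 hr02
    refine ⟨Matrix.GeneralLinearGroup.mkOfDetNeZero !![α,β;γ,δ] ?_, ?_⟩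
    · rw [Matrix.det_fin_two_of]
      exact hdet
    · ext i j
      fin_cases i <;> fin_cases j <;>
        simp [quadSubstMatrix, Matrix.GeneralLinearGroup.mkOfDetNeZero, Matrix.GeneralLinearGroup.mk',
          Matrix.vecHead, Matrix.vecTail]
      · exact h1.symm
      · exact h2'.symm
      · exact h3.symm
      · exact h4.symm
      · exact h5.symm
      · exact h6.symm
      · exact h7.symm
      · exact h8.symm
      · exact h9.symm
  · intro ψ ψ'
    constructor
    · intro h
      set A : Matrix (Fin 2) (Fin 2) ℂ := (ψ : Matrix (Fin 2) (Fin 2) ℂ) with hA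
      set B : Matrix (Fin 2) (Fin 2) ℂ := (ψ' : Matrix (Fin 2) (Fin 2) ℂ) with hB
      have hd : A 0 0 * A 1 1 - A 0 1 * A 1 0 ≠ 0 := by
        have hu : IsUnit A.det := (Matrix.isUnit_iff_isUnit_det A).mp ψ.isUnit
        rw [Matrix.det_fin_two] at hu
        exact hu.ne_zero
      have e1 : A 0 0 ^ 2 = B 0 0 ^ 2 := by
        have := Matrix.ext_iff.mpr h 0 0
        simpa [quadSubstMatrix] using this
      have e2 : 2 * A 0 0 * A 1 0 = 2 * B 0 0 * B 1 0 := by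
        have := Matrix.ext_iff.mpr h 0 1
        simpa [quadSubstMatrix] using this
      have e4 : A 0 0 * A 0 1 = B 0 0 * B 0 1 := by
        have := Matrix.ext_iff.mpr h 1 0
        simpa [quadSubstMatrix] using this
      have e5 : A 0 0 * A 1 1 + A 0 1 * A 1 0 = B 0 0 * B 1 1 + B 0 1 * B 1 0 := by
        have := Matrix.ext_iff.mpr h 1 1
        simpa [quadSubstMatrix] using this
      have e7 : A 0 1 ^ 2 = B 0 1 ^ 2 := by
        have := Matrix.ext_iff.mpr h 2 0
        simpa [quadSubstMatrix] using this
      have e8 : 2 * A 0 1 * A 1 1 = 2 * B 0 1 * B 1 1 := by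
        have := Matrix.ext_iff.mpr h 2 1
        simpa [quadSubstMatrix] using this
      have concl1 : (∀ i j, B i j = A i j) → ψ' = ψ ∨ ψ' = -ψ := by
        intro hij
        left
        apply Matrix.GeneralLinearGroup.ext
        intro i j
        exact hij i j
      have concl2 : (∀ i j, B i j = -A i j) → ψ' = ψ ∨ ψ' = -ψ := by
        intro hij
        right
        apply Matrix.GeneralLinearGroup.ext
        intro i j
        rw [show ((ψ' : Matrix (Fin 2) (Fin 2) ℂ)) = B from rfl, hij i j]
        simp [hA]
      by_cases h00 : A 0 0 = 0
      · have h01 : A 0 1 ≠ 0 := by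
          intro hz
          apply hd
          rw [h00, hz]; ring
        have hB00 : B 0 0 = 0 := by
          have : B 0 0 ^ 2 = 0 := by rw [← e1, h00]; ring
          exact (pow_eq_zero_iff (two_ne_zero)).mp this
        have hsplit : (B 0 1 - A 0 1) * (B 0 1 + A 0 1) = 0 := by linear_combination -e7
        rcases mul_eq_zero.mp hsplit with hc | hc
        · have hb01 : B 0 1 = A 0 1 := by linear_combination hc
          have hb11 : B 1 1 = A 1 1 := by
            apply mul_left_cancel₀ h01
            linear_combination -e8/2 - B 1 1 * hb01
          have hb10 : B 1 0 = A 1 0 := by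
            apply mul_left_cancel₀ h01
            linear_combination -e5 + A 1 1 * h00 - B 1 1 * hB00 - B 1 0 * hb01
          apply concl1
          intro i j
          fin_cases i <;> fin_cases j
          · simpa [hB00] using h00.symm
          · simpa using hb01
          · simpa using hb10
          · simpa using hb11
        · have hb01 : B 0 1 = -A 0 1 := by linear_combination hc
          have hb11 : B 1 1 = -A 1 1 := by
            apply mul_left_cancel₀ h01
            linear_combination e8/2 + B 1 1 * hb01
          have hb10 : B 1 0 = -A 1 0 := by
            apply mul_left_cancel₀ h01
            linear_combination e5 - A 1 1 * h00 + B 1 1 * hB00 + B 1 0 * hb01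
          apply concl2
          intro i j
          fin_cases i <;> fin_cases j
          · simp [hB00, h00]
          · simpa using hb01
          · simpa using hb10
          · simpa using hb11
      · have hsplit : (B 0 0 - A 0 0) * (B 0 0 + A 0 0) = 0 := by linear_combination -e1
        rcases mul_eq_zero.mp hsplit with hc | hc
        · have hb00 : B 0 0 = A 0 0 := by linear_combination hc
          have hb01 : B 0 1 = A 0 1 := by
            apply mul_left_cancel₀ h00
            linear_combination -e4 - B 0 1 * hb00
          have hb10 : B 1 0 = A 1 0 := by
            apply mul_left_cancel₀ h00
            linear_combination -e2/2 - B 1 0 * hb00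
          have hb11 : B 1 1 = A 1 1 := by
            apply mul_left_cancel₀ h00
            linear_combination -e5 - B 1 1 * hb00 - B 1 0 * hb01 - A 0 1 * hb10
          apply concl1
          intro i j
          fin_cases i <;> fin_cases j
          · simpa using hb00
          · simpa using hb01
          · simpa using hb10
          · simpa using hb11
        · have hb00 : B 0 0 = -A 0 0 := by linear_combination hc
          have hb01 : B 0 1 = -A 0 1 := by
            apply mul_left_cancel₀ h00
            linear_combination e4 + B 0 1 * hb00
          have hb10 : B 1 0 = -A 1 0 := by
            apply mul_left_cancel₀ h00
            linear_combination e2/2 + B 1 0 * hb00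
          have hb11 : B 1 1 = -A 1 1 := by
            apply mul_left_cancel₀ h00
            linear_combination e5 + B 1 1 * hb00 + B 1 0 * hb01 - A 0 1 * hb10
          apply concl2
          intro i j
          fin_cases i <;> fin_cases j
          · simpa using hb00
          · simpa using hb01
          · simpa using hb10
          · simpa using hb11
    · rintro (rfl | rfl)
      · rfl
      · ext i j
        fin_cases i <;> fin_cases j <;>
          simp [quadSubstMatrix, Units.val_neg, Matrix.neg_apply] <;> ring
end
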